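/- Let $n \geq 0$, $k \geq 1$, and probabilities $0 < P_0 \leq \cdots \leq P_k = 1$. Let $M_n = M_n^0$ be the random variable defined recursively by: for $\ell < k$, $P(M_n^\ell = m) = \binom{n}{m} P_\ell^m (1-P_\ell)^{n-m} + (1-P_\ell)^n P(M_n^{\ell+1} = m)$ for $m > 0$, $P(M_n^\ell = 0) = [n=0]$, and $M_n^k = n$. Then $E[M_n] = n P_0 + \sum_{\ell=1}^{k} n P_\ell \prod_{j < \ell} (1-P_j)^n$. -/

import Mathlib

lemma binom_mean (n : ℕ) (p : ℝ) :
    ∑ m ∈ Finset.range (n+1), (m:ℝ) * (n.choose m) * p^m * (1-p)^(n-m) = n * p := by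
  cases n with
  | zero => simp
  | succ n =>
    rw [Finset.sum_range_succ']
    have hpow : ∑ t ∈ Finset.range (n+1), p^t * (1-p)^(n-t) * ((n.choose t):ℝ) = 1 := by
      have := add_pow p (1-p) n
      simpa using this.symm
    have hterm : ∀ t ∈ Finset.range (n+1),
        ((t+1 : ℕ):ℝ) * ((n+1).choose (t+1)) * p^(t+1) * (1-p)^(n+1-(t+1))
          = ((n:ℝ)+1) * p * (p^t * (1-p)^(n-t) * (n.choose t)) := by
      intro t ht
      have h := Nat.add_one_mul_choose_eq n t
      have h' : ((n:ℝ)+1) * (n.choose t) = ((n+1).choose (t+1)) * ((t:ℝ)+1) := by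
        exact_mod_cast congrArg (Nat.cast (R := ℝ)) h
      have hsub : n + 1 - (t+1) = n - t := by omega
      rw [hsub]
      push_cast
      linear_combination (-(p^(t+1) * (1-p)^(n-t))) * h'
    rw [Finset.sum_congr rfl hterm, ← Finset.mul_sum, hpow]
    push_cast
    ring

/-- Expected number of mined blocks in the staircase election:
`E[M_n] = n P_0 + ∑_{ℓ=1}^{k} n P_ℓ ∏_{j<ℓ} (1-P_j)^n`. -/
theorem stmt1 (n k : ℕ) (hk : 1 ≤ k) (P : ℕ → ℝ)
    (hP0 : 0 < P 0) (hmono : ∀ i, i < k → P i ≤ P (i + 1)) (hPk : P k = 1)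
    (prob : ℕ → ℕ → ℝ)
    (hprobk : ∀ m, prob k m = if m = n then 1 else 0)
    (hprob0 : ∀ ℓ, ℓ < k → prob ℓ 0 = if n = 0 then 1 else 0)
    (hprobrec : ∀ ℓ m, ℓ < k → 0 < m →
      prob ℓ m = (n.choose m : ℝ) * P ℓ ^ m * (1 - P ℓ) ^ (n - m)
        + (1 - P ℓ) ^ n * prob (ℓ + 1) m) :
    ∑' m : ℕ, (m : ℝ) * prob 0 m
      = (n : ℝ) * P 0 + ∑ ℓ ∈ Finset.Icc 1 k,
          (n : ℝ) * P ℓ * ∏ j ∈ Finset.range ℓ, (1 - P j) ^ n := by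
  -- vanishing outside [0,n]
  have hvanish : ∀ d ℓ, ℓ + d = k → ∀ m, n < m → prob ℓ m = 0 := by
    intro d
    induction d with
    | zero =>
      intro ℓ hℓ m hm
      have : ℓ = k := by omega
      subst this
      rw [hprobk, if_neg (by omega)]
    | succ d ih =>
      intro ℓ hℓ m hm
      have hℓk : ℓ < k := by omega
      rw [hprobrec ℓ m hℓk (by omega)]
      rw [Nat.choose_eq_zero_of_lt hm, ih (ℓ+1) (by omega) m hm]
      simp
  -- expectation formula by downward induction
  have hS : ∀ d ℓ, ℓ + d = k →
      ∑ m ∈ Finset.range (n+1), (m:ℝ) * prob ℓ m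
        = ∑ j ∈ Finset.Icc ℓ k, (n:ℝ) * P j * ∏ i ∈ Finset.Ico ℓ j, (1 - P i)^n := by
    intro d
    induction d with
    | zero =>
      intro ℓ hℓ
      have : ℓ = k := by omega
      subst this
      simp only [hprobk]
      rw [Finset.Icc_self, Finset.sum_singleton, Finset.Ico_self, Finset.prod_empty, hPk]
      simp only [mul_ite, mul_one, mul_zero, Finset.sum_ite_eq']
      simp
    | succ d ih =>
      intro ℓ hℓ
      have hℓk : ℓ < k := by omega
      have hsplit : ∀ m ∈ Finset.range (n+1),
          (m:ℝ) * prob ℓ m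
            = (m:ℝ) * ((n.choose m : ℝ) * P ℓ ^ m * (1 - P ℓ) ^ (n - m))
              + (1 - P ℓ)^n * ((m:ℝ) * prob (ℓ+1) m) := by
        intro m hm
        rcases Nat.eq_zero_or_pos m with h0 | hpos
        · subst h0; simp
        · rw [hprobrec ℓ m hℓk hpos]; ring
      rw [Finset.sum_congr rfl hsplit, Finset.sum_add_distrib, ← Finset.mul_sum]
      have hbin : ∑ m ∈ Finset.range (n+1),
          (m:ℝ) * ((n.choose m : ℝ) * P ℓ ^ m * (1 - P ℓ) ^ (n - m)) = n * P ℓ := by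
        have := binom_mean n (P ℓ)
        rw [← this]
        exact Finset.sum_congr rfl (fun m _ => by ring)
      rw [hbin, ih (ℓ+1) (by omega)]
      -- RHS: split off j = ℓ
      have hins : Finset.Icc ℓ k = insert ℓ (Finset.Icc (ℓ+1) k) := by
        ext x; simp only [Finset.mem_Icc, Finset.mem_insert]; omega
      rw [hins, Finset.sum_insert (by simp)]
      have hterm0 : (n:ℝ) * P ℓ * ∏ i ∈ Finset.Ico ℓ ℓ, (1 - P i)^n = n * P ℓ := by
        simp
      rw [hterm0]
      congr 1
      rw [Finset.mul_sum]
      refine Finset.sum_congr rfl fun j hj => ?_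
      have hj' : ℓ + 1 ≤ j := (Finset.mem_Icc.mp hj).1
      have : Finset.Ico ℓ j = insert ℓ (Finset.Ico (ℓ+1) j) := by
        ext x; simp only [Finset.mem_Ico, Finset.mem_insert]; omega
      rw [this, Finset.prod_insert (by simp)]
      ring
  -- conclude
  have htsum : ∑' m : ℕ, (m : ℝ) * prob 0 m
      = ∑ m ∈ Finset.range (n+1), (m:ℝ) * prob 0 m := by
    refine tsum_eq_sum fun m hm => ?_
    have : n < m := by simpa [Finset.mem_range] using hm
    rw [hvanish k 0 (by omega) m this, mul_zero]
  rw [htsum, hS k 0 (by omega)]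
  have hins : Finset.Icc 0 k = insert 0 (Finset.Icc 1 k) := by
    ext x; simp only [Finset.mem_Icc, Finset.mem_insert]; omega
  rw [hins, Finset.sum_insert (by simp)]
  simp only [← Finset.range_eq_Ico]
  simp
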